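/- For each fixed g ∈ P there exists a unique automorphism ψ_g of the I₁-system G_{ι₁} such that ψ_g([e]) = [g]; explicitly, ψ_g([h]) = [h]·[g] for [h] ∈ V₁ and ψ_g(s) = s when the vertex s exists. -/

import Mathlib

universe u

section GoursatSetup

variable {G₁ G₂ : Type u} [Group G₁] [Group G₂]

/-- `π₁(H)`, the projection of `H` to the first factor. -/
def projFst (H : Subgroup (G₁ × G₂)) : Subgroup G₁ := H.map (MonoidHom.fst G₁ G₂)

/-- `π₂(H)`, the projection of `H` to the second factor. -/
def projSnd (H : Subgroup (G₁ × G₂)) : Subgroup G₂ := H.map (MonoidHom.snd G₁ G₂)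

/-- `ι₁⁻¹(H) = {g ∈ G₁ | (g, e) ∈ H}`. -/
def kerFst (H : Subgroup (G₁ × G₂)) : Subgroup G₁ := H.comap (MonoidHom.inl G₁ G₂)

/-- `ι₂⁻¹(H) = {g ∈ G₂ | (e, g) ∈ H}`. -/
def kerSnd (H : Subgroup (G₁ × G₂)) : Subgroup G₂ := H.comap (MonoidHom.inr G₁ G₂)

theorem kerFst_le_projFst (H : Subgroup (G₁ × G₂)) : kerFst H ≤ projFst H :=
  fun g hg => ⟨(g, 1), hg, rfl⟩

theorem kerSnd_le_projSnd (H : Subgroup (G₁ × G₂)) : kerSnd H ≤ projSnd H :=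
  fun g hg => ⟨(1, g), hg, rfl⟩

/-- `ι₁⁻¹(H)` is a normal subgroup of `π₁(H)`. -/
instance kerFst_normal (H : Subgroup (G₁ × G₂)) :
    ((kerFst H).subgroupOf (projFst H)).Normal := by
  constructor
  intro n hn g
  rw [Subgroup.mem_subgroupOf] at hn ⊢
  obtain ⟨x, hxH, hx⟩ := g.2
  have key : x * (((n : G₁), 1) : G₁ × G₂) * x⁻¹ ∈ H :=
    mul_mem (mul_mem hxH hn) (inv_mem hxH)
  have : x * (((n : G₁), 1) : G₁ × G₂) * x⁻¹ = (((g * n * g⁻¹ : projFst H) : G₁), 1) := by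
    ext
    · simp [← hx]
    · simp
  rwa [this] at key

/-- `ι₂⁻¹(H)` is a normal subgroup of `π₂(H)`. -/
instance kerSnd_normal (H : Subgroup (G₁ × G₂)) :
    ((kerSnd H).subgroupOf (projSnd H)).Normal := by
  constructor
  intro n hn g
  rw [Subgroup.mem_subgroupOf] at hn ⊢
  obtain ⟨x, hxH, hx⟩ := g.2
  have key : x * ((1, (n : G₂)) : G₁ × G₂) * x⁻¹ ∈ H :=
    mul_mem (mul_mem hxH hn) (inv_mem hxH)
  have : x * ((1, (n : G₂)) : G₁ × G₂) * x⁻¹ = (1, ((g * n * g⁻¹ : projSnd H) : G₂)) := by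
    ext
    · simp
    · simp [← hx]
  rwa [this] at key

/-- The quotient `V₁ = π₁(H)/ι₁⁻¹(H)`. -/
abbrev QuotFst (H : Subgroup (G₁ × G₂)) := projFst H ⧸ (kerFst H).subgroupOf (projFst H)

/-- The quotient `π₂(H)/ι₂⁻¹(H)`. -/
abbrev QuotSnd (H : Subgroup (G₁ × G₂)) := projSnd H ⧸ (kerSnd H).subgroupOf (projSnd H)

/-- The vertex set of the auxiliary system `G_{ι₁}` : it is `V₁` if `π₁(H) = G₁`
(the extra summand is then empty) and `V₁ ⊔ {s}` otherwise. -/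
abbrev AuxVert (H : Subgroup (G₁ × G₂)) := QuotFst H ⊕ PLift (projFst H ≠ ⊤)

/-- The auxiliary binary relational system `G_{ι₁}` over the label set
`I₁ = I_{ι₁} ⊔ (J₁ \ {0})`. -/
def auxRel (H : Subgroup (G₁ × G₂)) {Iι J₁ : Type u} (j₁0 : J₁) (r : J₁ → G₁) :
    (Iι ⊕ {j : J₁ // j ≠ j₁0}) → AuxVert H → AuxVert H → Prop
  | _,      .inr _, .inr _ => True
  | .inl _, .inl a, .inl b => b = a
  | .inr j, .inl a, .inl b =>
      ∃ h : r j.val ∈ projFst H, b = QuotientGroup.mk ⟨r j.val, h⟩ * a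
  | .inl _, .inl _, .inr _ => False
  | .inl _, .inr _, .inl _ => False
  | .inr j, .inl _, .inr _ => r j.val ∉ projFst H
  | .inr j, .inr _, .inl _ => r j.val ∉ projFst H

/-- The generating family `R = (r_i)_{i ∈ I₁}` of `G₁`. -/
def cayGenFst (H : Subgroup (G₁ × G₂)) {Iι J₁ : Type u} (rι : Iι → kerFst H) (j₁0 : J₁)
    (r : J₁ → G₁) : (Iι ⊕ {j : J₁ // j ≠ j₁0}) → G₁
  | .inl i => (rι i : G₁)
  | .inr j => r j.val

/-- The Cayley diagram `Cay(G₁, R)` as an `I₁`-system. -/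
def cayRelFst (H : Subgroup (G₁ × G₂)) {Iι J₁ : Type u} (rι : Iι → kerFst H) (j₁0 : J₁)
    (r : J₁ → G₁) (i : Iι ⊕ {j : J₁ // j ≠ j₁0}) (g g' : G₁) : Prop :=
  g' = cayGenFst H rι j₁0 r i * g

/-- The map `φ₀ : G₁ → V(G_{ι₁})`, sending `g` to `[g]` if `g ∈ π₁(H)` and to `s`
otherwise. -/
noncomputable def phiZero (H : Subgroup (G₁ × G₂)) (g : G₁) : AuxVert H :=
  letI := Classical.dec (g ∈ projFst H)
  if h : g ∈ projFst H then .inl (QuotientGroup.mk ⟨g, h⟩)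
  else .inr ⟨fun hP => h (by rw [hP]; exact Subgroup.mem_top g)⟩

end GoursatSetup

/-- The automorphism group of a binary relational system `R` over a label set `I`,
as a subgroup of the permutations of the vertex set. -/
def relAut {I V : Type*} (R : I → V → V → Prop) : Subgroup (Equiv.Perm V) where
  carrier := {e | ∀ i v w, R i v w ↔ R i (e v) (e w)}
  one_mem' := by intro i v w; simp
  mul_mem' := by
    intro a b ha hb i v w
    simpa [Equiv.Perm.mul_apply] using (hb i v w).trans (ha i (b v) (b w))
  inv_mem' := by
    intro a ha i v w
    simpa [Equiv.Perm.inv_def] using (ha i (a⁻¹ v) (a⁻¹ w)).symm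

/-- For each `g ∈ π₁(H)` there is a unique automorphism `ψ_g` of the auxiliary
`I₁`-system `G_{ι₁}` with `ψ_g([e]) = [g]`; explicitly `ψ_g([h]) = [h]·[g]` on `V₁`
and `ψ_g(s) = s` when the vertex `s` exists. -/
theorem aux_system_unique_automorphism {G₁ G₂ : Type u} [Group G₁] [Group G₂]
    (H : Subgroup (G₁ × G₂)) {Iι J₁ : Type u} (rι : Iι → kerFst H) (j₁0 : J₁) (r : J₁ → G₁)
    (hr0 : r j₁0 = 1)
    (hcos : ∀ g : G₁, ∃! j : J₁, g * (r j)⁻¹ ∈ kerFst H)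
    (hKgen : Subgroup.closure (Set.range fun i => ((rι i : G₁))) = kerFst H)
    (g : projFst H) :
    (∃! ψ : relAut (auxRel H (Iι := Iι) j₁0 r),
        (ψ : Equiv.Perm (AuxVert H)) (Sum.inl (1 : QuotFst H))
          = Sum.inl (QuotientGroup.mk g)) ∧
    ∀ ψ : relAut (auxRel H (Iι := Iι) j₁0 r),
      (ψ : Equiv.Perm (AuxVert H)) (Sum.inl (1 : QuotFst H)) = Sum.inl (QuotientGroup.mk g) →
        (∀ h : QuotFst H,
            (ψ : Equiv.Perm (AuxVert H)) (Sum.inl h) = Sum.inl (h * QuotientGroup.mk g)) ∧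
        ∀ u : PLift (projFst H ≠ ⊤),
            (ψ : Equiv.Perm (AuxVert H)) (Sum.inr u) = Sum.inr u := by
  classical
  -- The explicit permutation: right multiplication by [g] on V₁, identity on {s}.
  set γ : QuotFst H := QuotientGroup.mk g with hγ
  set e : Equiv.Perm (AuxVert H) :=
    Equiv.sumCongr (Equiv.mulRight γ) (Equiv.refl _) with he_def
  have he : e ∈ relAut (auxRel H (Iι := Iι) j₁0 r) := by
    rintro (i | j) (a | u) (b | v) <;>
      simp only [he_def, Equiv.sumCongr_apply, Sum.map_inl, Sum.map_inr, Equiv.coe_mulRight,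
        Equiv.refl_apply, auxRel]
    · exact (mul_left_inj γ).symm
    · constructor
      · rintro ⟨h, rfl⟩; exact ⟨h, mul_assoc _ _ _⟩
      · rintro ⟨h, hb⟩
        exact ⟨h, by
          have := hb.trans (mul_assoc _ _ _).symm
          exact mul_right_cancel this⟩
  -- The key rigidity claim.
  have key : ∀ ψ : relAut (auxRel H (Iι := Iι) j₁0 r),
      (ψ : Equiv.Perm (AuxVert H)) (Sum.inl (1 : QuotFst H)) = Sum.inl γ →
        (∀ h : QuotFst H,
            (ψ : Equiv.Perm (AuxVert H)) (Sum.inl h) = Sum.inl (h * γ)) ∧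
        ∀ u : PLift (projFst H ≠ ⊤),
            (ψ : Equiv.Perm (AuxVert H)) (Sum.inr u) = Sum.inr u := by
    intro ψ hψ1
    have hrel : ∀ i v w, auxRel H (Iι := Iι) j₁0 r i v w ↔
        auxRel H (Iι := Iι) j₁0 r i ((ψ : Equiv.Perm (AuxVert H)) v)
          ((ψ : Equiv.Perm (AuxVert H)) w) := ψ.2
    constructor
    · intro h
      induction h using QuotientGroup.induction_on with
      | H p =>
        obtain ⟨j, hjK, _⟩ := hcos (p : G₁)
        have hrjP : r j ∈ projFst H := by
          have : ((p : G₁) * (r j)⁻¹)⁻¹ * (p : G₁) ∈ projFst H :=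
            mul_mem (inv_mem (kerFst_le_projFst H hjK)) p.2
          simpa [mul_assoc] using this
        have hmk : (QuotientGroup.mk p : QuotFst H) = QuotientGroup.mk ⟨r j, hrjP⟩ := by
          rw [QuotientGroup.eq]
          have hn : ((⟨r j, hrjP⟩ : projFst H) * p⁻¹) ∈
              (kerFst H).subgroupOf (projFst H) := by
            rw [Subgroup.mem_subgroupOf]
            simpa using inv_mem hjK
          have := (kerFst_normal H).conj_mem _ hn p⁻¹
          have h2 : p⁻¹ * ((⟨r j, hrjP⟩ : projFst H) * p⁻¹) * p⁻¹⁻¹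
              = p⁻¹ * ⟨r j, hrjP⟩ := by group
          rwa [h2] at this
        by_cases hj0 : j = j₁0
        · have hp1 : (QuotientGroup.mk p : QuotFst H) = 1 := by
            rw [hmk]
            have : (⟨r j, hrjP⟩ : projFst H) = 1 := by
              ext; simp [hj0, hr0]
            rw [this, QuotientGroup.mk_one]
          rw [hp1, one_mul, hψ1]
        · -- use the edge labelled j from [1] to [r j]
          have hedge : auxRel H (Iι := Iι) j₁0 r (Sum.inr ⟨j, hj0⟩)
              (Sum.inl (1 : QuotFst H))
              (Sum.inl (QuotientGroup.mk ⟨r j, hrjP⟩ : QuotFst H)) :=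
            ⟨hrjP, (mul_one _).symm⟩
          have h2 := (hrel _ _ _).mp hedge
          rw [hψ1] at h2
          rw [hmk]
          rcases hw : (ψ : Equiv.Perm (AuxVert H))
              (Sum.inl (QuotientGroup.mk ⟨r j, hrjP⟩ : QuotFst H)) with b | v
          · rw [hw] at h2
            obtain ⟨_, hb⟩ := h2
            rw [hb]
          · rw [hw] at h2
            exact absurd hrjP h2
    · intro u
      have hne := u.down
      have hx : ∃ x : G₁, x ∉ projFst H := by
        by_contra hc
        push_neg at hc
        exact hne ((Subgroup.eq_top_iff' _).mpr hc)
      obtain ⟨x, hx⟩ := hx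
      obtain ⟨j, hjK, _⟩ := hcos x
      have hrj : r j ∉ projFst H := by
        intro hP
        exact hx (by
          have : (x * (r j)⁻¹) * r j ∈ projFst H :=
            mul_mem (kerFst_le_projFst H hjK) hP
          simpa [mul_assoc] using this)
      have hj0 : j ≠ j₁0 := by
        intro hj; apply hrj; rw [hj, hr0]; exact one_mem _
      have hloop : auxRel H (Iι := Iι) j₁0 r (Sum.inr ⟨j, hj0⟩) (Sum.inr u) (Sum.inr u) :=
        trivial
      have h2 := (hrel _ _ _).mp hloop
      rcases hw : (ψ : Equiv.Perm (AuxVert H)) (Sum.inr u) with b | v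
      · rw [hw] at h2
        obtain ⟨hP, -⟩ := h2
        exact absurd hP hrj
      · congr
        exact Subsingleton.elim _ _
  refine ⟨⟨⟨e, he⟩, ?_, ?_⟩, key⟩
  · simp [he_def]
  · rintro ⟨ψ, hψmem⟩ hψ1
    obtain ⟨h1, h2⟩ := key ⟨ψ, hψmem⟩ hψ1
    apply Subtype.ext
    apply Equiv.ext
    rintro (h | u)
    · rw [h1 h]; simp [he_def]
    · rw [h2 u]; simp [he_def]
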